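/- Let (A, ≤, →, S) be an implicative algebra with application ∘, let i = ⨅_{a ∈ A}(a → a), k = ⨅_{a,b}(a → (b → a)), s = ⨅_{a,b,c}((a → (b → c)) → ((a → b) → (a → c))), and suppose ν ∈ S satisfies ((ν ∘ a) ∘ b) ∘ c ≤ a ∘ (b ∘ c) for all a, b, c ∈ A. Let ι be an Alexandroff interior operator on A compatible with S (ι(S) = S ∩ A_ι) and such that i ∘ a ≤ ι(a) for all a ∈ A. Write a →_ι b = ι(a → b) and a ∘_ι b = c_ι(a ∘ b) for a, b ∈ A_ι, where c_ι(x) = ⨅ {d ∈ A_ι : x ≤ d}. Then: (1) the elements k_ι := ι((ν ∘ i) ∘ k) and s_ι := ι((ν ∘ ((ν ∘ i) ∘ (ν ∘ i))) ∘ s) lie in S ∩ A_ι and satisfy, for all a, b, c ∈ A_ι, k_ι ≤ a →_ι (b →_ι a) and s_ι ≤ a →_ι (b →_ι (c →_ι ((a ∘_ι c) ∘_ι (b ∘_ι c)))); and (2) the inclusion map A_ι → A is a computationally dense applicative morphism from the implicative algebra (A_ι, ≤, →_ι, S ∩ A_ι) to (A, ≤, →, S), a density witness being h = ι : S → S ∩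 A_ι with t = i. -/

import Mathlib

/-- The application map associated to an implication on a complete lattice. -/
def appOf {A : Type*} [CompleteLattice A] (imp : A → A → A) (a b : A) : A :=
  sInf {c | a ≤ imp b c}

/-- The set of fixed points (open elements) of an operator. -/
def fixedSet {A : Type*} (ι : A → A) : Set A := {x | ι x = x}

/-- The closure operator associated to an interior operator:
`c_ι(a) = ⨅ {b ∈ A_ι : a ≤ b}`. -/
def closureOf {A : Type*} [CompleteLattice A] (ι : A → A) (a : A) : A :=
  sInf {b | b ∈ fixedSet ι ∧ a ≤ b}

/-- The modified implication `a →_ι b = ι(a → b)`. -/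
def impIota {A : Type*} (imp : A → A → A) (ι : A → A) (a b : A) : A :=
  ι (imp a b)

/-- The modified application `a ∘_ι b = c_ι(a ∘ b)`. -/
def appIota {A : Type*} [CompleteLattice A] (imp : A → A → A) (ι : A → A) (a b : A) : A :=
  closureOf ι (appOf imp a b)

/-- Changing an implicative algebra by a compatible Alexandroff interior operator:
`A_ι` carries combinators `k_ι = ι((ν∘i)∘k)` and `s_ι = ι((ν∘((ν∘i)∘(ν∘i)))∘s)` in
`S ∩ A_ι`, and the inclusion `A_ι → A` is a computationally dense applicative
morphism with density witness `h = ι` and `t = i`. -/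
theorem change_implicative_algebra {A : Type*} [CompleteLattice A]
    (imp : A → A → A)
    (hmono : ∀ a a' b b' : A, a' ≤ a → b ≤ b' → imp a b ≤ imp a' b')
    (hinf : ∀ (a : A) (B : Set A), imp a (sInf B) = ⨅ b ∈ B, imp a b)
    (S : Set A)
    (Sup : ∀ a b : A, a ∈ S → a ≤ b → b ∈ S)
    (Smp : ∀ a b : A, imp a b ∈ S → a ∈ S → b ∈ S)
    (Sk : (⨅ (x : A) (y : A), imp x (imp y x)) ∈ S)
    (Ss : (⨅ (x : A) (y : A) (z : A),
        imp (imp x (imp y z)) (imp (imp x y) (imp x z))) ∈ S)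
    (ν : A) (hν : ν ∈ S)
    (hassoc : ∀ a b c : A,
      appOf imp (appOf imp (appOf imp ν a) b) c ≤ appOf imp a (appOf imp b c))
    (ι : A → A)
    (hdefl : ∀ a, ι a ≤ a) (hidem : ∀ a, ι (ι a) = ι a)
    (hmonoι : ∀ a b : A, a ≤ b → ι a ≤ ι b)
    (halex : ∀ B : Set A, ι (sInf B) = ⨅ b ∈ B, ι b)
    (hcompatS : ι '' S = S ∩ fixedSet ι)
    (hi : ∀ a : A, appOf imp (⨅ x : A, imp x x) a ≤ ι a) :
    -- (1) the combinators k_ι and s_ι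
    (ι (appOf imp (appOf imp ν (⨅ x : A, imp x x)) (⨅ (x : A) (y : A), imp x (imp y x)))
        ∈ S ∩ fixedSet ι) ∧
    (ι (appOf imp (appOf imp ν
          (appOf imp (appOf imp ν (⨅ x : A, imp x x)) (appOf imp ν (⨅ x : A, imp x x))))
        (⨅ (x : A) (y : A) (z : A),
          imp (imp x (imp y z)) (imp (imp x y) (imp x z)))) ∈ S ∩ fixedSet ι) ∧
    (∀ a b : A, a ∈ fixedSet ι → b ∈ fixedSet ι →
      ι (appOf imp (appOf imp ν (⨅ x : A, imp x x)) (⨅ (x : A) (y : A), imp x (imp y x)))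
        ≤ impIota imp ι a (impIota imp ι b a)) ∧
    (∀ a b c : A, a ∈ fixedSet ι → b ∈ fixedSet ι → c ∈ fixedSet ι →
      ι (appOf imp (appOf imp ν
          (appOf imp (appOf imp ν (⨅ x : A, imp x x)) (appOf imp ν (⨅ x : A, imp x x))))
        (⨅ (x : A) (y : A) (z : A),
          imp (imp x (imp y z)) (imp (imp x y) (imp x z))))
        ≤ impIota imp ι a (impIota imp ι b (impIota imp ι c
            (appIota imp ι (appIota imp ι a c) (appIota imp ι b c))))) ∧
    -- (2) the inclusion A_ι → A is a computationally dense applicative morphism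
    (∀ a : A, a ∈ S ∩ fixedSet ι → a ∈ S) ∧
    (∃ r ∈ S, ∀ a a' : A, a ∈ fixedSet ι → a' ∈ fixedSet ι →
        impIota imp ι a a' ∈ S ∩ fixedSet ι →
        r ≤ imp (impIota imp ι a a') (imp a a')) ∧
    (∀ C : Set A, C ⊆ fixedSet ι → sInf C ∈ fixedSet ι) ∧
    -- density witness h = ι, t = i
    (∀ b ∈ S, ι b ∈ S ∩ fixedSet ι) ∧
    ((⨅ x : A, imp x x) ∈ S ∧ ∀ b ∈ S, (⨅ x : A, imp x x) ≤ imp (ι b) b) := by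
  classical
  -- basic facts about application
  have adj1 : ∀ a b c : A, a ≤ imp b c → appOf imp a b ≤ c := fun _ _ _ h => sInf_le h
  have unit : ∀ a b : A, a ≤ imp b (appOf imp a b) := by
    intro a b
    rw [appOf, hinf]
    exact le_iInf₂ fun c hc => hc
  have adj2 : ∀ a b c : A, appOf imp a b ≤ c → a ≤ imp b c := fun a b c h =>
    (unit a b).trans (hmono _ _ _ _ le_rfl h)
  have appLe : ∀ a b p q : A, a ≤ imp p q → b ≤ p → appOf imp a b ≤ q :=
    fun a b p q h1 h2 => adj1 _ _ _ (h1.trans (hmono _ _ _ _ h2 le_rfl))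
  have appMono : ∀ a a' b b' : A, a ≤ a' → b ≤ b' →
      appOf imp a b ≤ appOf imp a' b' := fun a a' b b' ha hb =>
    adj1 _ _ _ (ha.trans ((unit a' b').trans (hmono _ _ _ _ hb le_rfl)))
  have appS : ∀ a b : A, a ∈ S → b ∈ S → appOf imp a b ∈ S := fun a b haS hbS =>
    Smp _ _ (Sup _ _ haS (unit a b)) hbS
  set i : A := ⨅ x : A, imp x x with hi_def
  set k : A := ⨅ (x : A) (y : A), imp x (imp y x) with hk_def
  set s : A := ⨅ (x : A) (y : A) (z : A),
      imp (imp x (imp y z)) (imp (imp x y) (imp x z)) with hs_def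
  have kle : ∀ a b : A, k ≤ imp a (imp b a) := fun a b => (iInf_le _ a).trans (iInf_le _ b)
  have sle : ∀ a b c : A,
      s ≤ imp (imp a (imp b c)) (imp (imp a b) (imp a c)) := fun a b c =>
    (iInf_le _ a).trans ((iInf_le _ b).trans (iInf_le _ c))
  have ile : ∀ a : A, i ≤ imp a a := fun a => iInf_le _ a
  have hiS : i ∈ S := by
    refine Sup (appOf imp (appOf imp s k) k) i (appS _ _ (appS _ _ Ss Sk) Sk) ?_
    refine le_iInf fun x => ?_
    exact appLe _ _ _ _ (appLe _ _ _ _ (sle x (imp x x) x) (kle x (imp x x))) (kle x x)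
  have sapp : ∀ a b c : A,
      appOf imp (appOf imp (appOf imp s a) b) c ≤
        appOf imp (appOf imp a c) (appOf imp b c) := by
    intro a b c
    have ha : a ≤ imp c (imp (appOf imp b c)
        (appOf imp (appOf imp a c) (appOf imp b c))) :=
      (unit a c).trans (hmono _ _ _ _ le_rfl (unit _ _))
    exact adj1 _ _ _ (appLe _ _ _ _ (appLe _ _ _ _
      (sle c (appOf imp b c) (appOf imp (appOf imp a c) (appOf imp b c))) ha) (unit b c))
  have ιS : ∀ x ∈ S, ι x ∈ S ∩ fixedSet ι := fun x hx =>
    hcompatS ▸ Set.mem_image_of_mem ι hx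
  have clUnit : ∀ x : A, x ≤ closureOf ι x := fun x => le_sInf fun b hb => hb.2
  refine ⟨?_, ?_, ?_, ?_, fun a ha => ha.1, ?_, ?_, fun b hb => ιS b hb, hiS, ?_⟩
  · exact ιS _ (appS _ _ (appS _ _ hν hiS) Sk)
  · exact ιS _ (appS _ _ (appS _ _ hν (appS _ _ (appS _ _ hν hiS) (appS _ _ hν hiS))) Ss)
  · intro a b _ _
    simp only [impIota]
    refine hmonoι _ _ (adj2 _ _ _ ?_)
    calc appOf imp (appOf imp (appOf imp ν i) k) a
        ≤ appOf imp i (appOf imp k a) := hassoc i k a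
      _ ≤ ι (appOf imp k a) := hi _
      _ ≤ ι (imp b a) := hmonoι _ _ (adj1 _ _ _ (kle a b))
  · intro a b c _ _ _
    simp only [impIota]
    set T : A := appIota imp ι (appIota imp ι a c) (appIota imp ι b c) with hT
    have hsabc : appOf imp (appOf imp s a) b ≤ imp c T := by
      refine adj2 _ _ _ ((sapp a b c).trans ?_)
      refine ((appMono _ _ _ _ (clUnit _) (clUnit _)).trans ?_)
      exact clUnit _
    refine hmonoι _ _ (adj2 _ _ _ ?_)
    calc appOf imp (appOf imp (appOf imp ν
            (appOf imp (appOf imp ν i) (appOf imp ν i))) s) a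
        ≤ appOf imp (appOf imp (appOf imp ν i) (appOf imp ν i)) (appOf imp s a) :=
          hassoc _ s a
      _ ≤ appOf imp i (appOf imp (appOf imp ν i) (appOf imp s a)) := hassoc _ _ _
      _ ≤ ι (appOf imp (appOf imp ν i) (appOf imp s a)) := hi _
      _ ≤ ι (imp b (ι (imp c T))) := by
          refine hmonoι _ _ (adj2 _ _ _ ?_)
          calc appOf imp (appOf imp (appOf imp ν i) (appOf imp s a)) b
              ≤ appOf imp i (appOf imp (appOf imp s a) b) := hassoc _ _ _
            _ ≤ ι (appOf imp (appOf imp s a) b) := hi _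
            _ ≤ ι (imp c T) := hmonoι _ _ hsabc
  · refine ⟨i, hiS, fun a a' _ _ _ => ?_⟩
    simp only [impIota]
    exact (ile (ι (imp a a'))).trans (hmono _ _ _ _ le_rfl (hdefl _))
  · intro C hC
    show ι (sInf C) = sInf C
    have h2 : (⨅ b ∈ C, ι b) = ⨅ b ∈ C, b :=
      iInf_congr fun b => iInf_congr fun hb => hC hb
    rw [halex, h2, ← sInf_eq_iInf]
  · exact fun b hb => (ile (ι b)).trans (hmono _ _ _ _ le_rfl (hdefl b))
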